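/- (Correctness of the ghost-component algorithm for addition.) Let w, w′ ∈ W(k[X₁,…,Xₘ]) and let G₀,…,G_{n−1}, H₀,…,H_{n−1} ∈ W(k)[X₁,…,Xₘ] satisfy π(G_i) = w_i and π(H_i) = w′_i for every i ∈ {0,…,n−1}. Suppose R₀,…,R_{n−1} ∈ W(k)[X₁,…,Xₘ] satisfy, for every j ∈ {0,…,n−1}, the ghost-component equation Σ_{i=0}^{j} p^i R_i^{p^{j−i}} = Σ_{i=0}^{j} p^i G_i^{p^{j−i}} + Σ_{i=0}^{j} p^i H_i^{p^{j−i}}. Then π(R_i) = (w + w′)_i for every i ∈ {0,…,n−1}. -/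
import Mathlib

noncomputable section

lemma wv_p_torsionfree (p : ℕ) [Fact p.Prime] (k : Type*) [CommRing k] [IsReduced k]
    [CharP k p] (x : WittVector p k) (h : (p : WittVector p k) * x = 0) : x = 0 := by
  have h' : WittVector.verschiebung (WittVector.frobenius x) = 0 := by
    rw [WittVector.verschiebung_frobenius]; rw [mul_comm] at h; exact h
  have hf : WittVector.frobenius x = 0 := by
    ext n
    have := congrArg (fun y => WittVector.coeff y (n + 1)) h'
    simpa [WittVector.verschiebung_coeff_add_one] using this
  ext n
  have : x.coeff n ^ p = 0 := by
    have := congrArg (fun y => WittVector.coeff y n) hf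
    simpa [WittVector.coeff_frobenius_charP] using this
  simpa using IsNilpotent.eq_zero ⟨p, this⟩

lemma poly_p_torsionfree (p m : ℕ) [Fact p.Prime] (k : Type*) [CommRing k] [IsReduced k]
    [CharP k p] (F : MvPolynomial (Fin m) (WittVector p k))
    (h : (p : MvPolynomial (Fin m) (WittVector p k)) * F = 0) : F = 0 := by
  have h2 : ∀ d, (p : WittVector p k) * F.coeff d = 0 := fun d => by
    have h1 : ((p : MvPolynomial (Fin m) (WittVector p k)) * F).coeff d = 0 := by
      rw [h]; simp
    rwa [show (p : MvPolynomial (Fin m) (WittVector p k)) = MvPolynomial.C (p : WittVector p k)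
      by simp, MvPolynomial.coeff_C_mul] at h1
  exact MvPolynomial.ext _ _ fun d => by
    simpa using wv_p_torsionfree p k _ (h2 d)

lemma poly_ppow_torsionfree (p m : ℕ) [Fact p.Prime] (k : Type*) [CommRing k] [IsReduced k]
    [CharP k p] (e : ℕ) (F : MvPolynomial (Fin m) (WittVector p k))
    (h : (p : MvPolynomial (Fin m) (WittVector p k)) ^ e * F = 0) : F = 0 := by
  induction e with
  | zero => simpa using h
  | succ e ih =>
    apply ih
    apply poly_p_torsionfree p m k
    rw [← mul_assoc, mul_comm _ ((p : MvPolynomial (Fin m) (WittVector p k)) ^ e)]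
    simpa [pow_succ, mul_assoc] using h

lemma ghost_partial_inj (p m : ℕ) [Fact p.Prime] (k : Type*) [CommRing k] [IsReduced k]
    [CharP k p] (x y : WittVector p (MvPolynomial (Fin m) (WittVector p k))) :
    ∀ j, (∀ i ≤ j, WittVector.ghostComponent i x = WittVector.ghostComponent i y) →
      x.coeff j = y.coeff j := by
  intro j
  induction j using Nat.strong_induction_on with
  | _ j ih =>
    intro h
    have hj := h j le_rfl
    rw [WittVector.ghostComponent_apply, WittVector.ghostComponent_apply,
      aeval_wittPolynomial, aeval_wittPolynomial, Finset.sum_range_succ,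
      Finset.sum_range_succ] at hj
    have hlow : ∑ i ∈ Finset.range j, (p : MvPolynomial (Fin m) (WittVector p k)) ^ i
        * x.coeff i ^ p ^ (j - i)
        = ∑ i ∈ Finset.range j, (p : MvPolynomial (Fin m) (WittVector p k)) ^ i
        * y.coeff i ^ p ^ (j - i) := by
      apply Finset.sum_congr rfl
      intro i hi
      rw [ih i (Finset.mem_range.mp hi) (fun i' hi' => h i' (hi'.trans (Finset.mem_range.mp hi).le))]
    rw [hlow] at hj
    simp only [Nat.sub_self, pow_zero, pow_one] at hj
    have hj' := add_left_cancel hj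
    have hcan : (p : MvPolynomial (Fin m) (WittVector p k)) ^ j
        * (x.coeff j - y.coeff j) = 0 := by
      rw [mul_sub, hj', sub_self]
    have := poly_ppow_torsionfree p m k j _ hcan
    exact sub_eq_zero.mp this

/-- The ring homomorphism `π : W(k)[X₁,…,Xₘ] → k[X₁,…,Xₘ]` reducing each coefficient
to its 0-th Witt coordinate. -/
def wittPi (p : ℕ) [Fact p.Prime] (m : ℕ) (k : Type*) [CommRing k] :
    MvPolynomial (Fin m) (WittVector p k) →+* MvPolynomial (Fin m) k :=
  MvPolynomial.map (WittVector.constantCoeff)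

/-- The ring homomorphism `ε : W(k)[X₁,…,Xₘ] → W(k[X₁,…,Xₘ])` which on `W(k)` is
induced by functoriality of `W` from the inclusion `k → k[X₁,…,Xₘ]` and sends each
`Xᵢ` to the Teichmüller lift `[Xᵢ]`. -/
def wittEps (p : ℕ) [Fact p.Prime] (m : ℕ) (k : Type*) [CommRing k] :
    MvPolynomial (Fin m) (WittVector p k) →+* WittVector p (MvPolynomial (Fin m) k) :=
  MvPolynomial.eval₂Hom (WittVector.map (MvPolynomial.C))
    (fun i => WittVector.teichmuller p (MvPolynomial.X i))

theorem stmt13 (p m n : ℕ) [Fact p.Prime] (hm : 1 ≤ m) (hn : 1 ≤ n)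
    (k : Type*) [CommRing k] [IsReduced k] [CharP k p]
    (w w' : WittVector p (MvPolynomial (Fin m) k))
    (G H R : ℕ → MvPolynomial (Fin m) (WittVector p k))
    (hG : ∀ i < n, wittPi p m k (G i) = w.coeff i)
    (hH : ∀ i < n, wittPi p m k (H i) = w'.coeff i)
    (hR : ∀ j < n,
      ∑ i ∈ Finset.range (j + 1),
          (p : MvPolynomial (Fin m) (WittVector p k)) ^ i * (R i) ^ p ^ (j - i)
        = (∑ i ∈ Finset.range (j + 1),
              (p : MvPolynomial (Fin m) (WittVector p k)) ^ i * (G i) ^ p ^ (j - i))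
            + ∑ i ∈ Finset.range (j + 1),
                (p : MvPolynomial (Fin m) (WittVector p k)) ^ i * (H i) ^ p ^ (j - i)) :
    ∀ i < n, wittPi p m k (R i) = (w + w').coeff i := by
  intro i hi
  set Y : WittVector p (MvPolynomial (Fin m) (WittVector p k)) :=
    WittVector.mk p G + WittVector.mk p H with hY
  have hgh : ∀ j ≤ i, WittVector.ghostComponent j (WittVector.mk p R)
      = WittVector.ghostComponent j Y := by
    intro j hj
    rw [hY, map_add]
    simp only [WittVector.ghostComponent_apply, aeval_wittPolynomial, WittVector.coeff_mk]
    exact hR j (lt_of_le_of_lt hj hi)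
  have hco : R i = Y.coeff i := by
    have h := ghost_partial_inj p m k (WittVector.mk p R) Y i hgh
    simpa [WittVector.coeff_mk] using h
  rw [hco]
  have hmap : wittPi p m k (Y.coeff i) = (WittVector.map (wittPi p m k) Y).coeff i :=
    (WittVector.map_coeff _ _ _).symm
  rw [hmap]
  set u := WittVector.map (wittPi p m k) (WittVector.mk p G) with hu
  set v := WittVector.map (wittPi p m k) (WittVector.mk p H) with hv
  have hYuv : WittVector.map (wittPi p m k) Y = u + v := by
    rw [hY, map_add]
  have htu : WittVector.truncate n u = WittVector.truncate n w := by
    refine TruncatedWittVector.ext fun j => ?_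
    rw [WittVector.coeff_truncate, WittVector.coeff_truncate, hu, WittVector.map_coeff]
    exact hG j j.isLt
  have htv : WittVector.truncate n v = WittVector.truncate n w' := by
    refine TruncatedWittVector.ext fun j => ?_
    rw [WittVector.coeff_truncate, WittVector.coeff_truncate, hv, WittVector.map_coeff]
    exact hH j j.isLt
  have htsum : WittVector.truncate n (u + v) = WittVector.truncate n (w + w') := by
    rw [map_add, map_add, htu, htv]
  have h := congrArg (fun z => TruncatedWittVector.coeff (⟨i, hi⟩ : Fin n) z) htsum
  simp only [WittVector.coeff_truncate] at h
  rw [hYuv]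
  exact h
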